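/- Let H be a real inner product space, L : H → H nonnegative self-adjoint, and suppose (φ, μ, r) solves the SAV-reformulated nonlocal Cahn–Hilliard system φ_t = −MLμ, μ = ε²Lφ + (r/√(E₁(φ)+C₀)) F′(φ), r_t = (1/(2√(E₁(φ)+C₀)))(F′(φ), φ_t), with the constraint r(0) = √(E₁(φ(0)) + C₀). Then r(t)² + (ε²/2)(Lφ(t), φ(t)) ≤ r(0)² + (ε²/2)(Lφ(0), φ(0)) for all t ≥ 0; in particular r(t)² and (Lφ(t), φ(t)) are uniformly bounded in time. -/

import Mathlib

open scoped RealInnerProductSpace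

/-- uniform-in-time bound for the continuous SAV system.
If `(φ, μ, r)` solves `φ' = -MLμ`, `μ = ε²Lφ + (r/√(E₁(φ)+C₀))F'(φ)`,
`r' = (1/(2√(E₁(φ)+C₀)))(F'(φ), φ')`, with `r 0 = √(E₁(φ 0)+C₀)`, then
`r(t)² + (ε²/2)(Lφ(t), φ(t)) ≤ r(0)² + (ε²/2)(Lφ(0), φ(0))` for all `t ≥ 0`.
Here `f t` stands for `F'(φ t)` and `E₁ : H → ℝ` for `φ ↦ ∫_Ω F(φ)`. -/
theorem sav_uniform_bound
    {H : Type*} [NormedAddCommGroup H] [InnerProductSpace ℝ H]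
    (L : H →L[ℝ] H)
    (hLsa : ∀ u v : H, ⟪L u, v⟫ = ⟪u, L v⟫)
    (hLpos : ∀ u : H, 0 ≤ ⟪L u, u⟫)
    (M ε C0 : ℝ) (hM : 0 < M) (hε : 0 < ε)
    (E1 : H → ℝ) (φ μ f : ℝ → H) (r : ℝ → ℝ)
    (hpos : ∀ t, 0 < E1 (φ t) + C0)
    (hφ : ∀ t, HasDerivAt φ (-(M • L (μ t))) t)
    (hμ : ∀ t, μ t = (ε ^ 2) • L (φ t) +
      (r t / Real.sqrt (E1 (φ t) + C0)) • f t)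
    (hr : ∀ t, HasDerivAt r
      ((1 / (2 * Real.sqrt (E1 (φ t) + C0))) * ⟪f t, -(M • L (μ t))⟫) t)
    (hr0 : r 0 = Real.sqrt (E1 (φ 0) + C0))
    (hcont : Continuous fun t => ⟪L (μ t), μ t⟫) :
    ∀ t : ℝ, 0 ≤ t →
      (r t) ^ 2 + ε ^ 2 / 2 * ⟪L (φ t), φ t⟫ ≤
        (r 0) ^ 2 + ε ^ 2 / 2 * ⟪L (φ 0), φ 0⟫ := by
  set G : ℝ → ℝ := fun t => (r t) ^ 2 + ε ^ 2 / 2 * ⟪L (φ t), φ t⟫ with hG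
  have hGderiv : ∀ t, HasDerivAt G (-(M * ⟪L (μ t), μ t⟫)) t := by
    intro t
    have hLφ : HasDerivAt (fun t => L (φ t)) (L (-(M • L (μ t)))) t :=
      (L.hasFDerivAt.comp_hasDerivAt t (hφ t))
    have hin : HasDerivAt (fun t => ⟪L (φ t), φ t⟫)
        (⟪L (φ t), -(M • L (μ t))⟫ + ⟪L (-(M • L (μ t))), φ t⟫) t :=
      (hLφ.inner ℝ (hφ t))
    have hr2 : HasDerivAt (fun t => (r t) ^ 2)
        (2 * r t * ((1 / (2 * Real.sqrt (E1 (φ t) + C0))) * ⟪f t, -(M • L (μ t))⟫)) t := by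
      simpa [mul_comm, pow_two] using (hr t).fun_pow 2
    have h := hr2.add (hin.const_mul (ε ^ 2 / 2))
    convert h using 1
    case e'_4 => rfl
    case e'_5 => rfl
    case e'_8 => rfl
    have hs : (0:ℝ) < Real.sqrt (E1 (φ t) + C0) := Real.sqrt_pos.mpr (hpos t)
    have hkey : ⟪μ t, -(M • L (μ t))⟫ =
        ⟪(ε ^ 2) • L (φ t), -(M • L (μ t))⟫ +
        ⟪(r t / Real.sqrt (E1 (φ t) + C0)) • f t, -(M • L (μ t))⟫ := by
      rw [hμ t, inner_add_left]
    have hsa : ⟪L (-(M • L (μ t))), φ t⟫ = ⟪L (φ t), -(M • L (μ t))⟫ := by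
      rw [hLsa, real_inner_comm]
    rw [hsa]
    have hμμ : ⟪μ t, -(M • L (μ t))⟫ = -(M * ⟪L (μ t), μ t⟫) := by
      rw [inner_neg_right, inner_smul_right, real_inner_comm]
    rw [← hμμ, hkey, real_inner_smul_left, real_inner_smul_left]
    have : (2:ℝ) * r t * ((1 / (2 * Real.sqrt (E1 (φ t) + C0))) * ⟪f t, -(M • L (μ t))⟫)
        = (r t / Real.sqrt (E1 (φ t) + C0)) * ⟪f t, -(M • L (μ t))⟫ := by
      field_simp
    rw [this]; ring
  have hanti : Antitone G := by
    apply antitone_of_deriv_nonpos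
    · exact fun t => (hGderiv t).differentiableAt
    · intro t
      rw [(hGderiv t).deriv]
      have := hLpos (μ t)
      nlinarith
  intro t ht
  exact hanti ht
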